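/- For every positive integer n, S(n) ≥ (3/log 3)·log n, with equality if and only if n is a power of 3. -/

import Mathlib

def S (n : ℕ) : ℕ := n.factorization.sum fun p k => k * p

lemma log3_gt_one : 1 < Real.log 3 := by
  rw [show (1:ℝ) = Real.log (Real.exp 1) by simp]
  exact Real.log_lt_log (Real.exp_pos 1) (by
    have := Real.exp_one_lt_d9; linarith)

lemma log3_pos : 0 < Real.log 3 := by linarith [log3_gt_one]

lemma aux_strict (x : ℝ) (hx : 3 < x) : 3 * Real.log x < x * Real.log 3 := by
  have h0 : (0:ℝ) < x := by linarith
  have h1 : Real.log (x/3) < x/3 - 1 :=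
    Real.log_lt_sub_one_of_pos (by linarith) (by intro h; field_simp at h; linarith)
  have h2 : Real.log (x/3) = Real.log x - Real.log 3 := Real.log_div (by linarith) (by norm_num)
  have h3 := log3_gt_one
  nlinarith [mul_nonneg (by linarith : (0:ℝ) ≤ x - 3) (by linarith : (0:ℝ) ≤ Real.log 3 - 1)]

lemma prime_ineq (p : ℕ) (hp : p.Prime) : 3 * Real.log p ≤ p * Real.log 3 := by
  rcases eq_or_ne p 3 with h | h
  · subst h; push_cast; linarith
  rcases eq_or_ne p 2 with h2 | h2
  · subst h2
    have : Real.log 8 < Real.log 9 := Real.log_lt_log (by norm_num) (by norm_num)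
    have e8 : Real.log 8 = 3 * Real.log 2 := by
      rw [show (8:ℝ) = 2^3 by norm_num, Real.log_pow]; push_cast; ring
    have e9 : Real.log 9 = 2 * Real.log 3 := by
      rw [show (9:ℝ) = 3^2 by norm_num, Real.log_pow]; push_cast; ring
    push_cast; linarith
  · have hp3 : 3 < p := by have := hp.two_le; omega
    exact (aux_strict p (by exact_mod_cast hp3)).le

lemma prime_ineq_strict (p : ℕ) (hp : p.Prime) (h : p ≠ 3) :
    3 * Real.log p < p * Real.log 3 := by
  rcases eq_or_ne p 2 with h2 | h2
  · subst h2
    have : Real.log 8 < Real.log 9 := Real.log_lt_log (by norm_num) (by norm_num)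
    have e8 : Real.log 8 = 3 * Real.log 2 := by
      rw [show (8:ℝ) = 2^3 by norm_num, Real.log_pow]; push_cast; ring
    have e9 : Real.log 9 = 2 * Real.log 3 := by
      rw [show (9:ℝ) = 3^2 by norm_num, Real.log_pow]; push_cast; ring
    push_cast; linarith
  · have hp3 : 3 < p := by have := hp.two_le; omega
    exact aux_strict p (by exact_mod_cast hp3)

lemma S_mul (a b : ℕ) (ha : a ≠ 0) (hb : b ≠ 0) : S (a * b) = S a + S b := by
  unfold S
  rw [Nat.factorization_mul ha hb, Finsupp.sum_add_index]
  · intro p _; simp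
  · intro p _ k1 k2; ring

lemma S_prime (p : ℕ) (hp : p.Prime) : S p = p := by
  unfold S
  rw [hp.factorization, Finsupp.sum_single_index] <;> simp

lemma S_pow3 (k : ℕ) : S (3 ^ k) = 3 * k := by
  induction k with
  | zero => simp [S]
  | succ j ihj =>
    rw [pow_succ, S_mul _ 3 (by positivity) (by norm_num), ihj, S_prime 3 (by norm_num)]
    ring

theorem S_lower_bound (n : ℕ) (hn : 0 < n) :
    (3 / Real.log 3) * Real.log n ≤ (S n : ℝ) ∧
      ((S n : ℝ) = (3 / Real.log 3) * Real.log n ↔ ∃ k : ℕ, n = 3 ^ k) := by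
  induction n using Nat.strong_induction_on with
  | _ n ih =>
  rcases eq_or_lt_of_le (show 1 ≤ n from hn) with h1 | h1
  · -- n = 1
    have hn1 : n = 1 := h1.symm
    subst hn1
    constructor
    · simp [S]
    · constructor
      · intro _; exact ⟨0, by norm_num⟩
      · intro _; simp [S]
  · -- n ≥ 2
    set p := n.minFac with hpdef
    have hp : p.Prime := Nat.minFac_prime (by omega)
    obtain ⟨m, hm⟩ : p ∣ n := Nat.minFac_dvd n
    have hm0 : 0 < m := by
      rcases Nat.eq_zero_or_pos m with h | h
      · subst h; simp at hm; omega
      · exact h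
    have hp2 : 2 ≤ p := hp.two_le
    have hmlt : m < n := by
      rw [hm]; calc m = 1 * m := (one_mul m).symm
        _ < p * m := (Nat.mul_lt_mul_right hm0).mpr (by omega)
    obtain ⟨ih1, ih2⟩ := ih m hmlt hm0
    have hSn : S n = p + S m := by
      rw [hm, S_mul p m (by omega) (by omega), S_prime p hp]
    have hlog : Real.log n = Real.log p + Real.log m := by
      rw [hm]; push_cast
      exact Real.log_mul (by positivity) (by exact_mod_cast hm0.ne')
    have hple : (3 / Real.log 3) * Real.log p ≤ (p : ℝ) := by
      rw [div_mul_eq_mul_div, div_le_iff₀ log3_pos]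
      exact prime_ineq p hp
    constructor
    · rw [hlog, hSn]; push_cast; linarith [ih1]
    · constructor
      · intro heq
        rw [hlog, hSn] at heq
        push_cast at heq
        -- equality forces both
        have hpe : (3 / Real.log 3) * Real.log p = (p : ℝ) := by
          linarith [ih1, hple]
        have hp3 : p = 3 := by
          by_contra h
          have := prime_ineq_strict p hp h
          rw [div_mul_eq_mul_div, div_eq_iff log3_pos.ne'] at hpe
          linarith
        have hme : (S m : ℝ) = (3 / Real.log 3) * Real.log m := by
          linarith [ih1, hple]
        obtain ⟨k, hk⟩ := ih2.mp hme
        exact ⟨k + 1, by rw [hm, hp3, hk]; ring⟩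
      · rintro ⟨k, hk⟩
        subst hk
        rw [S_pow3 k]
        push_cast
        rw [Real.log_pow]
        field_simp
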